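/- Let θ be real and let w₀, w₁, w₂ be complex numbers with w = w₀ + w₁ + w₂. For real h near 0 define p(h) = (1 − θ h w₁)(1 − θ h w₂) and R(h) = 1 + h w / p(h) + (θ h w₀ + (1/2 − θ) h w) h w / p(h)². Then lim_{h → 0} ( R(h) − 1 − w h − (1/2) w² h² ) / h² = 0; that is, R(h) = 1 + w h + (1/2) w² h² + o(h²), so the MCS amplification factor agrees with exp(w h) up to and including second order in h. -/

import Mathlib

open Filter

set_option maxHeartbeats 1000000

/-- Second-order consistency of the MCS scheme: the amplification factor
`R(h)` agrees with `exp(wh)` up to and including second order in `h`. -/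
theorem mcs_second_order_consistency
    (θ : ℝ) (w0 w1 w2 : ℂ) (w : ℂ) (hw : w = w0 + w1 + w2) :
    Tendsto
      (fun h : ℝ =>
        ((1 + (h : ℂ) * w / ((1 - (θ : ℂ) * (h : ℂ) * w1) * (1 - (θ : ℂ) * (h : ℂ) * w2))
            + ((θ : ℂ) * (h : ℂ) * w0 + ((1 / 2 : ℂ) - (θ : ℂ)) * (h : ℂ) * w) * ((h : ℂ) * w)
              / ((1 - (θ : ℂ) * (h : ℂ) * w1) * (1 - (θ : ℂ) * (h : ℂ) * w2)) ^ 2)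
          - 1 - w * (h : ℂ) - (1 / 2 : ℂ) * w ^ 2 * (h : ℂ) ^ 2) / (h : ℂ) ^ 2)
      (nhdsWithin (0 : ℝ) {0}ᶜ) (nhds 0) := by
  set a : ℂ := -(θ : ℂ) * (w1 + w2) with ha
  set b : ℂ := (θ : ℂ) ^ 2 * (w1 * w2) with hb
  set M : ℝ → ℂ := fun h =>
    (-(w * b) - w * a ^ 2 - a * w ^ 2)
    + (h : ℂ) * (-(2 * a * b * w) - (1 / 2) * w ^ 2 * a ^ 2 - w ^ 2 * b)
    + (h : ℂ) ^ 2 * (-(w * b ^ 2) - a * b * w ^ 2)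
    + (h : ℂ) ^ 3 * (-(1 / 2) * w ^ 2 * b ^ 2) with hM
  set g : ℝ → ℂ := fun h =>
    (h : ℂ) * M h / ((1 - (θ : ℂ) * (h : ℂ) * w1) * (1 - (θ : ℂ) * (h : ℂ) * w2)) ^ 2 with hg
  have hgc : ContinuousAt g 0 := by
    apply ContinuousAt.div
    · exact (Complex.continuous_ofReal.continuousAt).mul (by fun_prop)
    · fun_prop
    · norm_num
  have hg0 : g 0 = 0 := by simp [hg]
  have h1 : Tendsto g (nhdsWithin (0 : ℝ) {0}ᶜ) (nhds 0) := by
    have := hgc.tendsto.mono_left (nhdsWithin_le_nhds (s := {0}ᶜ))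
    rwa [hg0] at this
  refine Tendsto.congr' ?_ h1
  have e1 : ∀ᶠ h : ℝ in nhds 0, (1 - (θ : ℂ) * (h : ℂ) * w1) ≠ 0 := by
    have : ContinuousAt (fun h : ℝ => (1 - (θ : ℂ) * (h : ℂ) * w1)) 0 := by fun_prop
    have := this.eventually_ne (by norm_num : (1 - (θ : ℂ) * ((0:ℝ) : ℂ) * w1) ≠ 0)
    exact this
  have e2 : ∀ᶠ h : ℝ in nhds 0, (1 - (θ : ℂ) * (h : ℂ) * w2) ≠ 0 := by
    have : ContinuousAt (fun h : ℝ => (1 - (θ : ℂ) * (h : ℂ) * w2)) 0 := by fun_prop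
    have := this.eventually_ne (by norm_num : (1 - (θ : ℂ) * ((0:ℝ) : ℂ) * w2) ≠ 0)
    exact this
  have e3 : ∀ᶠ h : ℝ in nhdsWithin (0 : ℝ) {0}ᶜ, h ≠ 0 := by
    exact eventually_mem_nhdsWithin
  filter_upwards [e1.filter_mono nhdsWithin_le_nhds, e2.filter_mono nhdsWithin_le_nhds, e3]
    with h h1 h2 h0
  have h0' : (h : ℂ) ≠ 0 := Complex.ofReal_ne_zero.mpr h0
  simp only [hg, hM, hw, ha, hb]
  have hD : ((1 - (θ : ℂ) * (h : ℂ) * w1) * (1 - (θ : ℂ) * (h : ℂ) * w2)) ^ 2 ≠ 0 :=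
    pow_ne_zero 2 (mul_ne_zero h1 h2)
  rw [div_eq_div_iff hD (pow_ne_zero 2 h0')]
  have h1' : (1 - (h : ℂ) * w1 * (θ : ℂ)) ≠ 0 := by rwa [show (h : ℂ) * w1 * (θ : ℂ) = (θ : ℂ) * (h : ℂ) * w1 by ring]
  have h2' : (1 - (h : ℂ) * w2 * (θ : ℂ)) ≠ 0 := by rwa [show (h : ℂ) * w2 * (θ : ℂ) = (θ : ℂ) * (h : ℂ) * w2 by ring]
  field_simp
  ring
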